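/- Let G = (V, 𝖤) be a finite connected graph with an orientation of each edge, M its signed vertex-edge incidence matrix, and star_x the row of M at vertex x. Fix x₀ ∈ V. Then the number of spanning trees of G equals det[⟨star_x, star_y⟩]_{x,y ∈ V ∖ {x₀}} (the Matrix-Tree theorem). -/

import Mathlib

open Finset Matrix

section CauchyBinet

variable {n : Type*} {m : Type*} [Fintype n] [DecidableEq n] [Fintype m] [DecidableEq m]
variable {R : Type*} [CommRing R]

lemma det_mul_sum_fun (A : Matrix n m R) (B : Matrix m n R) :
    (A * B).det = ∑ f : n → m, (∏ i, B (f i) i) * (A.submatrix id f).det := by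
  have h1 : (A * B).det
      = ∑ f : n → m, ∑ σ : Equiv.Perm n,
          ((Equiv.Perm.sign σ : ℤ) : R) * ∏ i, A (σ i) (f i) * B (f i) i := by
    simp only [det_apply', mul_apply, prod_univ_sum, mul_sum, Fintype.piFinset_univ]
    rw [Finset.sum_comm]
  rw [h1]
  refine Finset.sum_congr rfl fun f _ => ?_
  rw [det_apply', Finset.mul_sum]
  refine Finset.sum_congr rfl fun σ _ => ?_
  simp only [submatrix_apply, id_eq, prod_mul_distrib]
  ring

lemma det_submatrix_eq_zero_of_not_injective (A : Matrix n m R) (f : n → m)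
    (hf : ¬ Function.Injective f) : (A.submatrix id f).det = 0 := by
  simp only [Function.Injective, not_forall] at hf
  obtain ⟨i, j, hij, hne⟩ := hf
  exact Matrix.det_zero_of_column_eq hne fun k => by simp [Matrix.submatrix_apply, hij]

end CauchyBinet

section Fiber
set_option linter.unusedSectionVars false

variable {n : Type*} {m : Type*} [Fintype n] [DecidableEq n] [Fintype m] [DecidableEq m]
variable {R : Type*} [CommRing R]

noncomputable def egEquiv (g : n → m) (hg : Function.Injective g) :
    n ≃ {x // x ∈ univ.image g} :=
  Equiv.ofBijective (fun i => ⟨g i, Finset.mem_image_of_mem g (mem_univ i)⟩)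
    ((Fintype.bijective_iff_injective_and_card _).mpr
      ⟨fun a b hab => hg (congrArg Subtype.val hab),
        by rw [Fintype.card_coe, Finset.card_image_of_injective _ hg, Finset.card_univ]⟩)

@[simp] lemma egEquiv_apply (g : n → m) (hg : Function.Injective g) (i : n) :
    ((egEquiv g hg i : {x // x ∈ univ.image g}) : m) = g i := rfl

noncomputable def permOf (g : n → m) (hg : Function.Injective g) (f : n → m)
    (hf1 : Function.Injective f) (hf2 : univ.image f = univ.image g) : Equiv.Perm n :=
  Equiv.ofBijective (fun i => (egEquiv g hg).symm
      ⟨f i, by rw [← hf2]; exact Finset.mem_image_of_mem f (mem_univ i)⟩)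
    (Finite.injective_iff_bijective.mp fun a b hab => by
      have := (egEquiv g hg).symm.injective hab
      exact hf1 (congrArg Subtype.val this))

lemma g_permOf (g : n → m) (hg : Function.Injective g) (f : n → m)
    (hf1 : Function.Injective f) (hf2 : univ.image f = univ.image g) (i : n) :
    g (permOf g hg f hf1 hf2 i) = f i := by
  have : ((egEquiv g hg) (permOf g hg f hf1 hf2 i) : m)
      = (⟨f i, by rw [← hf2]; exact Finset.mem_image_of_mem f (mem_univ i)⟩ :
          {x // x ∈ univ.image g}) := by
    rw [permOf, Equiv.ofBijective_apply, Equiv.apply_symm_apply]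
  simpa using this

lemma image_comp_perm (g : n → m) (σ : Equiv.Perm n) :
    univ.image (g ∘ σ) = univ.image g := by
  rw [← Finset.image_image]
  congr 1
  exact Finset.image_univ_equiv σ

lemma sum_fiber_eq_det_sq (A : Matrix n m R) (g : n → m) (hg : Function.Injective g) :
    ∑ f ∈ univ.filter (fun f : n → m =>
        Function.Injective f ∧ univ.image f = univ.image g),
      ((∏ i, A i (f i)) * (A.submatrix id f).det)
    = ((A.submatrix id g).det) ^ 2 := by
  classical
  have hstep : ∑ f ∈ univ.filter (fun f : n → m =>
        Function.Injective f ∧ univ.image f = univ.image g),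
      ((∏ i, A i (f i)) * (A.submatrix id f).det)
      = ∑ σ : Equiv.Perm n, ((∏ i, A i (g (σ i))) * (A.submatrix id (g ∘ σ)).det) := by
    refine (Finset.sum_bij'
      (i := fun (σ : Equiv.Perm n) (_ : σ ∈ univ) => g ∘ σ)
      (j := fun f hf => permOf g hg f (Finset.mem_filter.mp hf).2.1
        (Finset.mem_filter.mp hf).2.2)
      ?_ ?_ ?_ ?_ ?_).symm
    · intro σ _
      refine Finset.mem_filter.mpr ⟨mem_univ _, hg.comp σ.injective, image_comp_perm g σ⟩
    · intro f hf; exact mem_univ _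
    · intro σ _
      ext i
      apply hg
      exact g_permOf g hg (g ∘ σ) (hg.comp σ.injective) (image_comp_perm g σ) i
    · intro f hf
      funext i
      exact g_permOf g hg f _ _ i
    · intro σ _
      rfl
  rw [hstep]
  have h2 : ∀ σ : Equiv.Perm n, (A.submatrix id (g ∘ σ)).det
      = ((Equiv.Perm.sign σ : ℤ) : R) * (A.submatrix id g).det := by
    intro σ
    have h3 : A.submatrix id (g ∘ σ) = (A.submatrix id g).submatrix id σ := rfl
    rw [h3, Matrix.det_permute']
  calc ∑ σ : Equiv.Perm n, ((∏ i, A i (g (σ i))) * (A.submatrix id (g ∘ σ)).det)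
      = (∑ σ : Equiv.Perm n, ((Equiv.Perm.sign σ : ℤ) : R) *
          ∏ i, (A.submatrix id g)ᵀ (σ i) i) * (A.submatrix id g).det := by
        rw [Finset.sum_mul]
        refine Finset.sum_congr rfl fun σ _ => ?_
        rw [h2]
        simp only [Matrix.transpose_apply, Matrix.submatrix_apply, id_eq]
        ring
    _ = (A.submatrix id g)ᵀ.det * (A.submatrix id g).det := by rw [← det_apply']
    _ = _ := by rw [Matrix.det_transpose, sq]

end Fiber

section CB2
set_option linter.unusedSectionVars false

variable {n : Type*} {m : Type*} [Fintype n] [DecidableEq n] [Fintype m] [DecidableEq m]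
variable {R : Type*} [CommRing R]

noncomputable def pickFun (S : Finset m)
    (h : S ∈ Finset.univ.powersetCard (Fintype.card n)) : n → m := fun i =>
  ((Fintype.equivOfCardEq (α := n) (β := {x // x ∈ S})
      (by rw [Fintype.card_coe]; exact ((Finset.mem_powersetCard.mp h).2).symm)) i : m)

lemma pickFun_injective (S : Finset m) (h : S ∈ Finset.univ.powersetCard (Fintype.card n)) :
    Function.Injective (pickFun (n := n) S h) := fun a b hab =>
  (Fintype.equivOfCardEq _).injective (Subtype.val_injective hab)

lemma pickFun_image (S : Finset m) (h : S ∈ Finset.univ.powersetCard (Fintype.card n)) :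
    univ.image (pickFun (n := n) S h) = S := by
  ext a
  simp only [Finset.mem_image, mem_univ, true_and]
  constructor
  · rintro ⟨i, rfl⟩; exact Finset.coe_mem _
  · intro ha
    exact ⟨(Fintype.equivOfCardEq (α := n) (β := {x // x ∈ S})
      (by rw [Fintype.card_coe]; exact ((Finset.mem_powersetCard.mp h).2).symm)).symm ⟨a, ha⟩,
      by simp [pickFun]⟩

lemma cauchy_binet_sq (A : Matrix n m R) :
    (A * Aᵀ).det = ∑ S ∈ (Finset.univ.powersetCard (Fintype.card n)).attach,
      ((A.submatrix id (pickFun S.1 S.2)).det) ^ 2 := by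
  classical
  rw [det_mul_sum_fun]
  have h0 : ∑ f : n → m, ((∏ i, Aᵀ (f i) i) * (A.submatrix id f).det)
      = ∑ f ∈ univ.filter (fun f : n → m => Function.Injective f),
          ((∏ i, A i (f i)) * (A.submatrix id f).det) := by
    rw [Finset.sum_filter_of_ne]
    · exact Finset.sum_congr rfl fun f _ => rfl
    · intro f _ hne
      by_contra hinj
      exact hne (by rw [det_submatrix_eq_zero_of_not_injective A f hinj, mul_zero])
  rw [h0]
  have hmaps : ∀ f ∈ univ.filter (fun f : n → m => Function.Injective f),
      univ.image f ∈ Finset.univ.powersetCard (Fintype.card n) := by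
    intro f hf
    rw [Finset.mem_powersetCard]
    exact ⟨Finset.subset_univ _,
      by rw [Finset.card_image_of_injective _ (Finset.mem_filter.mp hf).2, Finset.card_univ]⟩
  rw [← Finset.sum_fiberwise_of_maps_to hmaps
    (fun f => (∏ i, A i (f i)) * (A.submatrix id f).det)]
  rw [← Finset.sum_attach (Finset.univ.powersetCard (Fintype.card n))
    (fun S => ∑ f ∈ (univ.filter fun f : n → m => Function.Injective f).filter
      (fun f => univ.image f = S), ((∏ i, A i (f i)) * (A.submatrix id f).det))]
  refine Finset.sum_congr rfl fun S _ => ?_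
  rw [Finset.filter_filter]
  have himg : univ.image (pickFun (n := n) S.1 S.2) = S.1 := pickFun_image S.1 S.2
  rw [← sum_fiber_eq_det_sq A (pickFun S.1 S.2) (pickFun_injective S.1 S.2)]
  congr 1
  ext f
  simp [himg]

end CB2

section Graph
set_option linter.unusedSectionVars false

open SimpleGraph

variable {V : Type*} [Fintype V] [DecidableEq V] {ι : Type*} [Fintype ι] [DecidableEq ι]

/-- signed incidence over ℤ -/
def inc (head tail : ι → V) : Matrix V ι ℤ :=
  Matrix.of fun x i => if x = head i then 1 else if x = tail i then -1 else 0

/-- signed traversal indicator -/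
def dsign (head tail : ι → V) (i : ι) (a b : V) : ℤ :=
  if head i = a ∧ tail i = b then 1 else if head i = b ∧ tail i = a then -1 else 0

lemma dsign_eq_zero (head tail : ι → V) {i j : ι}
    (huniq : ∀ i j, s(head i, tail i) = s(head j, tail j) → i = j)
    {a b : V} (hab : s(head j, tail j) = s(a, b)) (hij : i ≠ j) :
    dsign head tail i a b = 0 := by
  unfold dsign
  split_ifs with h1 h2
  · exact absurd (huniq i j (by rw [hab, h1.1, h1.2])) hij
  · exact absurd (huniq i j (by rw [hab, h2.1, h2.2, Sym2.eq_swap])) hij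
  · rfl

lemma single_edge_div (head tail : ι → V)
    (huniq : ∀ i j, s(head i, tail i) = s(head j, tail j) → i = j)
    (i₀ : ι) (a b : V) (hab : s(head i₀, tail i₀) = s(a, b)) (hne : a ≠ b) (x : V) :
    ∑ i, inc head tail x i * dsign head tail i a b
      = (if x = a then 1 else 0) - (if x = b then 1 else 0) := by
  rw [Finset.sum_eq_single i₀]
  · rw [Sym2.eq_iff] at hab
    rcases hab with ⟨rfl, rfl⟩ | ⟨rfl, rfl⟩
    · have h1 : dsign head tail i₀ (head i₀) (tail i₀) = 1 := by simp [dsign]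
      rw [h1, mul_one, inc]
      simp only [Matrix.of_apply]
      by_cases hx1 : x = head i₀
      · subst hx1; simp [hne]
      · by_cases hx2 : x = tail i₀
        · subst hx2; simp [hx1]
        · simp [hx1, hx2]
    · have h1 : dsign head tail i₀ (tail i₀) (head i₀) = -1 := by
        have hcon : ¬(head i₀ = tail i₀ ∧ tail i₀ = head i₀) := fun hc => hne hc.2
        simp [dsign, hcon]
      rw [h1, inc]
      simp only [Matrix.of_apply, mul_neg, mul_one]
      by_cases hx1 : x = head i₀
      · subst hx1; simp [Ne.symm hne]
      · by_cases hx2 : x = tail i₀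
        · subst hx2; simp [hx1]
        · simp [hx1, hx2]
  · intro i _ hi
    rw [dsign_eq_zero head tail huniq hab hi, mul_zero]
  · intro h; exact absurd (Finset.mem_univ i₀) h

/-- flow along a walk -/
def flow (head tail : ι → V) {H : SimpleGraph V} {u v : V} (w : H.Walk u v) (i : ι) : ℤ :=
  (w.darts.map fun d => dsign head tail i d.fst d.snd).sum

lemma flow_div (head tail : ι → V)
    (huniq : ∀ i j, s(head i, tail i) = s(head j, tail j) → i = j)
    {H : SimpleGraph V} (hH : ∀ a b, H.Adj a b → ∃ i, s(head i, tail i) = s(a, b))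
    {u v : V} (w : H.Walk u v) (x : V) :
    ∑ i, inc head tail x i * flow head tail w i
      = (if x = u then 1 else 0) - (if x = v then 1 else 0) := by
  induction w with
  | nil => simp [flow]
  | @cons u u' v h p ih =>
    have hflow : ∀ i, flow head tail (SimpleGraph.Walk.cons h p) i
        = dsign head tail i u u' + flow head tail p i := by
      intro i; simp [flow, SimpleGraph.Walk.darts_cons]
    simp only [hflow, mul_add, Finset.sum_add_distrib]
    obtain ⟨i₀, hi₀⟩ := hH u u' h
    rw [single_edge_div head tail huniq i₀ u u' hi₀ h.ne x, ih]
    ring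
end Graph

section Det
set_option linter.unusedSectionVars false
set_option maxHeartbeats 1000000

open SimpleGraph

variable {V : Type*} [Fintype V] [DecidableEq V] {ι : Type*} [Fintype ι] [DecidableEq ι]

/-- the graph spanned by the sub-collection `S` of edges -/
def HS (head tail : ι → V) (S : Finset ι) : SimpleGraph V :=
  SimpleGraph.fromEdgeSet ((S.image fun i => s(head i, tail i) : Finset (Sym2 V)) : Set (Sym2 V))

lemma HS_adj (head tail : ι → V) (S : Finset ι) (a b : V) :
    (HS head tail S).Adj a b ↔ (∃ i ∈ S, s(head i, tail i) = s(a, b)) ∧ a ≠ b := by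
  simp [HS, SimpleGraph.fromEdgeSet_adj, Finset.mem_image]

lemma sym2_of_dsign_ne_zero {head tail : ι → V} {i : ι} {a b : V}
    (h : dsign head tail i a b ≠ 0) : s(head i, tail i) = s(a, b) := by
  unfold dsign at h
  split_ifs at h with h1 h2
  · rw [h1.1, h1.2]
  · rw [h2.1, h2.2, Sym2.eq_swap]
  · exact absurd rfl h

lemma flow_vanish (head tail : ι → V)
    (huniq : ∀ i j, s(head i, tail i) = s(head j, tail j) → i = j)
    (S : Finset ι) {u v : V} (w : (HS head tail S).Walk u v) {i : ι} (hi : i ∉ S) :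
    flow head tail w i = 0 := by
  apply List.sum_eq_zero
  intro x hx
  rw [List.mem_map] at hx
  obtain ⟨d, hd, rfl⟩ := hx
  by_contra hne0
  have hsym := sym2_of_dsign_ne_zero hne0
  have hadj := d.adj
  rw [HS_adj] at hadj
  obtain ⟨⟨j, hj, hj2⟩, -⟩ := hadj
  exact hi (huniq i j (by rw [hsym, hj2]) ▸ hj)

lemma sum_cols {α : Type*} [Fintype α] [DecidableEq α] (S : Finset ι) (g : α → ι)
    (hg : Function.Injective g) (hgim : Finset.univ.image g = S)
    (F : ι → ℤ) (hF : ∀ i ∉ S, F i = 0) :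
    ∑ j : α, F (g j) = ∑ i : ι, F i := by
  have h1 : ∑ i ∈ S, F i = ∑ j : α, F (g j) := by
    rw [← hgim]
    exact Finset.sum_image fun x _ y _ h => hg h
  rw [← h1]
  exact Finset.sum_subset (Finset.subset_univ S) (fun i _ hi => hF i hi)

lemma sum_subtype_ne {M : Type*} [AddCommMonoid M] (x₀ : V) (F : V → M) (h0 : F x₀ = 0) :
    ∑ x : {v : V // v ≠ x₀}, F ↑x = ∑ z : V, F z := by
  rw [← Finset.sum_erase Finset.univ h0]
  exact (Finset.sum_subtype (Finset.univ.erase x₀) (fun x => by simp) F).symm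

lemma det_sq_one_of_connected (head tail : ι → V) (x₀ : V)
    (huniq : ∀ i j, s(head i, tail i) = s(head j, tail j) → i = j)
    (S : Finset ι) (g : {v : V // v ≠ x₀} → ι) (hg : Function.Injective g)
    (hgim : Finset.univ.image g = S)
    (hconn : (HS head tail S).Connected) :
    (Matrix.of fun x j : {v : V // v ≠ x₀} => inc head tail ↑x (g j)).det ^ 2 = 1 := by
  classical
  set Q := Matrix.of fun x j : {v : V // v ≠ x₀} => inc head tail (↑x : V) (g j) with hQdef
  have hw : ∀ y : {v : V // v ≠ x₀}, (HS head tail S).Walk ↑y x₀ :=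
    fun y => Classical.choice (hconn.preconnected ↑y x₀)
  set P : Matrix {v : V // v ≠ x₀} {v : V // v ≠ x₀} ℤ :=
    Matrix.of fun j y => flow head tail (hw y) (g j) with hPdef
  have hadj : ∀ a b, (HS head tail S).Adj a b → ∃ i, s(head i, tail i) = s(a, b) := by
    intro a b hab
    obtain ⟨⟨i, _, hi⟩, -⟩ := (HS_adj head tail S a b).mp hab
    exact ⟨i, hi⟩
  have hQP : Q * P = 1 := by
    ext x y
    rw [Matrix.mul_apply]
    have hsum : ∑ j : {v : V // v ≠ x₀}, Q x j * P j y
        = ∑ i : ι, inc head tail (↑x : V) i * flow head tail (hw y) i := by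
      exact sum_cols S g hg hgim
        (fun i => inc head tail (↑x : V) i * flow head tail (hw y) i)
        (fun i hi => by rw [flow_vanish head tail huniq S (hw y) hi, mul_zero])
    rw [hsum, flow_div head tail huniq hadj (hw y) ↑x]
    have hx0 : (↑x : V) ≠ x₀ := x.2
    have : ((↑x : V) = ↑y) ↔ x = y := Subtype.coe_inj
    rw [Matrix.one_apply]
    by_cases hxy : x = y <;> simp [hxy, hx0, y.2, this]
  have hdet : Q.det * P.det = 1 := by
    rw [← Matrix.det_mul, hQP, Matrix.det_one]
  rcases Int.isUnit_iff.mp (IsUnit.of_mul_eq_one _ hdet) with h | h <;> rw [h] <;> norm_num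

lemma inc_split (head tail : ι → V) (i : ι) (hne : head i ≠ tail i) (z : V) :
    inc head tail z i = (if z = head i then 1 else 0) + (if z = tail i then -1 else 0) := by
  unfold inc
  simp only [Matrix.of_apply]
  by_cases h1 : z = head i
  · subst h1; simp [hne]
  · by_cases h2 : z = tail i
    · subst h2; simp [h1, Ne.symm hne]
    · simp [h1, h2]

lemma det_eq_zero_of_not_connected (head tail : ι → V) (x₀ : V)
    (hne : ∀ i, head i ≠ tail i)
    (S : Finset ι) (g : {v : V // v ≠ x₀} → ι) (hgim : Finset.univ.image g = S)
    (hnconn : ¬ (HS head tail S).Connected) :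
    (Matrix.of fun x j : {v : V // v ≠ x₀} => inc head tail ↑x (g j)).det = 0 := by
  classical
  set H := HS head tail S with hH
  rw [SimpleGraph.connected_iff] at hnconn
  push_neg at hnconn
  have hnpre : ¬ H.Preconnected := fun h => (hnconn h).false x₀
  rw [SimpleGraph.Preconnected] at hnpre
  push_neg at hnpre
  obtain ⟨a, b, hab⟩ := hnpre
  have hex : ∃ u, ¬ H.Reachable u x₀ := by
    by_contra hc
    push_neg at hc
    exact hab ((hc a).trans (hc b).symm)
  obtain ⟨u, hu⟩ := hex
  rw [← Matrix.exists_vecMul_eq_zero_iff]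
  have hux : u ≠ x₀ := fun h => hu (h ▸ SimpleGraph.Reachable.refl u)
  refine ⟨fun x => if H.Reachable u ↑x then 1 else 0, ?_, ?_⟩
  · intro hzero
    have := congrFun hzero ⟨u, hux⟩
    simp only [Pi.zero_apply] at this
    rw [if_pos (SimpleGraph.Reachable.refl u)] at this
    exact one_ne_zero this
  · funext j
    rw [Matrix.vecMul, dotProduct]
    simp only [Matrix.of_apply, Pi.zero_apply]
    set F : V → ℤ := fun z => (if H.Reachable u z then 1 else 0) * inc head tail z (g j)
      with hF
    have h0 : F x₀ = 0 := by rw [hF]; simp [hu]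
    have hstep : ∑ x : {v : V // v ≠ x₀}, F ↑x = ∑ z : V, F z := sum_subtype_ne x₀ F h0
    have hsingle : ∀ (c : V) (r : ℤ),
        ∑ z : V, (if H.Reachable u z then (1:ℤ) else 0) * (if z = c then r else 0)
          = if H.Reachable u c then r else 0 := by
      intro c r
      rw [Finset.sum_eq_single c]
      · by_cases hr : H.Reachable u c <;> simp [hr]
      · intro z _ hz; rw [if_neg hz, mul_zero]
      · intro h; exact absurd (Finset.mem_univ c) h
    have hmem : g j ∈ S := by rw [← hgim]; exact Finset.mem_image_of_mem g (Finset.mem_univ j)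
    have hadj : H.Adj (head (g j)) (tail (g j)) := by
      rw [hH, HS_adj]
      exact ⟨⟨g j, hmem, rfl⟩, hne (g j)⟩
    have hiff : H.Reachable u (head (g j)) ↔ H.Reachable u (tail (g j)) :=
      ⟨fun r => r.trans hadj.reachable, fun r => r.trans hadj.symm.reachable⟩
    calc ∑ x : {v : V // v ≠ x₀}, F ↑x = ∑ z : V, F z := hstep
      _ = 0 := by
          rw [hF]
          simp only [inc_split head tail (g j) (hne (g j)), mul_add,
            Finset.sum_add_distrib, hsingle]
          by_cases hr : H.Reachable u (head (g j))
          · rw [if_pos hr, if_pos (hiff.mp hr)]; ring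
          · rw [if_neg hr, if_neg (fun h => hr (hiff.mpr h))]; ring

lemma det_eq_zero_of_cycle (head tail : ι → V) (x₀ : V)
    (huniq : ∀ i j, s(head i, tail i) = s(head j, tail j) → i = j)
    (S : Finset ι) (g : {v : V // v ≠ x₀} → ι) (hg : Function.Injective g)
    (hgim : Finset.univ.image g = S)
    {a : V} (c : (HS head tail S).Walk a a) (hc : c.IsCycle) :
    (Matrix.of fun x j : {v : V // v ≠ x₀} => inc head tail ↑x (g j)).det = 0 := by
  classical
  rw [← Matrix.exists_mulVec_eq_zero_iff]
  refine ⟨fun j => flow head tail c (g j), ?_, ?_⟩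
  · -- the flow vector is nonzero
    cases c with
    | nil => exact absurd rfl hc.ne_nil
    | @cons _ b _ h p =>
      obtain ⟨⟨i₀, hi₀S, hi₀⟩, -⟩ := (HS_adj head tail S a b).mp h
      have hdartval : dsign head tail i₀ a b ≠ 0 := by
        unfold dsign
        rw [Sym2.eq_iff] at hi₀
        rcases hi₀ with ⟨h1, h2⟩ | ⟨h1, h2⟩
        · rw [if_pos ⟨h1, h2⟩]; norm_num
        · split_ifs with hcnd hcnd2
          · norm_num
          · norm_num
          · exact absurd ⟨h1, h2⟩ hcnd2
      have hflow : flow head tail (SimpleGraph.Walk.cons h p) i₀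
          = dsign head tail i₀ a b + (p.darts.map fun d =>
              dsign head tail i₀ d.fst d.snd).sum := by
        simp [flow, SimpleGraph.Walk.darts_cons]
      have hrest : (p.darts.map fun d => dsign head tail i₀ d.fst d.snd).sum = 0 := by
        apply List.sum_eq_zero
        intro x hx
        rw [List.mem_map] at hx
        obtain ⟨d, hd, rfl⟩ := hx
        by_contra hne0
        have hsym := sym2_of_dsign_ne_zero hne0
        have hnodup := hc.edges_nodup
        rw [SimpleGraph.Walk.edges_cons, List.nodup_cons] at hnodup
        refine hnodup.1 ?_
        have hde : d.edge = s(d.fst, d.snd) := rfl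
        have : d.edge = s(a, b) := by rw [hde, ← hsym, hi₀]
        rw [← this]
        exact List.mem_map_of_mem (f := SimpleGraph.Dart.edge) hd
      obtain ⟨j₀, -, hj₀⟩ := Finset.mem_image.mp (hgim ▸ hi₀S)
      intro hzero
      have := congrFun hzero j₀
      simp only [Pi.zero_apply] at this
      rw [hj₀, hflow, hrest, add_zero] at this
      exact hdartval this
  · funext x
    rw [Matrix.mulVec, dotProduct]
    simp only [Matrix.of_apply, Pi.zero_apply]
    have hadj : ∀ a' b', (HS head tail S).Adj a' b' → ∃ i, s(head i, tail i) = s(a', b') := by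
      intro a' b' hab
      obtain ⟨⟨i, _, hi⟩, -⟩ := (HS_adj head tail S a' b').mp hab
      exact ⟨i, hi⟩
    have hsum : ∑ j : {v : V // v ≠ x₀}, inc head tail (↑x : V) (g j) * flow head tail c (g j)
        = ∑ i : ι, inc head tail (↑x : V) i * flow head tail c i :=
      sum_cols S g hg hgim
        (fun i => inc head tail (↑x : V) i * flow head tail c i)
        (fun i hi => by rw [flow_vanish head tail huniq S c hi, mul_zero])
    rw [hsum, flow_div head tail huniq hadj c ↑x, sub_self]

end Det

section Main
set_option linter.unusedSectionVars false
set_option maxHeartbeats 1000000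

open SimpleGraph

variable {V : Type*} [Fintype V] [DecidableEq V] {ι : Type*} [Fintype ι] [DecidableEq ι]

open scoped Classical in
lemma det_sq_eq_tree_indicator (head tail : ι → V) (x₀ : V)
    (huniq : ∀ i j, s(head i, tail i) = s(head j, tail j) → i = j)
    (hne : ∀ i, head i ≠ tail i)
    (S : Finset ι) (g : {v : V // v ≠ x₀} → ι) (hg : Function.Injective g)
    (hgim : Finset.univ.image g = S) :
    (Matrix.of fun x j : {v : V // v ≠ x₀} => inc head tail ↑x (g j)).det ^ 2
      = if (HS head tail S).IsTree then 1 else 0 := by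
  classical
  by_cases htree : (HS head tail S).IsTree
  · rw [if_pos htree]
    exact det_sq_one_of_connected head tail x₀ huniq S g hg hgim htree.isConnected
  · rw [if_neg htree]
    by_cases hconn : (HS head tail S).Connected
    · have hnac : ¬ (HS head tail S).IsAcyclic := fun hac => htree ⟨hconn, hac⟩
      rw [SimpleGraph.IsAcyclic] at hnac
      push_neg at hnac
      obtain ⟨v, c, hc⟩ := hnac
      rw [det_eq_zero_of_cycle head tail x₀ huniq S g hg hgim c hc]
      norm_num
    · rw [det_eq_zero_of_not_connected head tail x₀ hne S g hgim hconn]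
      norm_num

end Main

/-- Matrix-Tree theorem: for a finite connected graph `G` with arbitrarily oriented
edges, signed incidence matrix `M`, stars `star_x = M x ·`, and a fixed vertex `x₀`,
the number of spanning trees of `G` equals `det[⟨star_x, star_y⟩]_{x,y ≠ x₀}`. -/
theorem stmt17 {V : Type*} [Fintype V] [DecidableEq V]
    (G : SimpleGraph V) [DecidableRel G.Adj] (hG : G.Connected)
    [Fintype G.edgeSet]
    (head tail : G.edgeSet → V)
    (hor : ∀ e : G.edgeSet, (e : Sym2 V) = s(head e, tail e))
    (M : Matrix V G.edgeSet ℝ)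
    (hM : ∀ x e, M x e = if x = head e then 1 else if x = tail e then -1 else 0)
    (x₀ : V) :
    (Nat.card {A : Finset G.edgeSet //
        (SimpleGraph.fromEdgeSet
          ((A.image (fun e : G.edgeSet => (e : Sym2 V)) : Finset (Sym2 V)) : Set (Sym2 V))).IsTree} : ℝ)
      = (Matrix.of fun x y : {v : V // v ≠ x₀} =>
          ∑ e : G.edgeSet, M (x : V) e * M (y : V) e).det := by
  classical
  have huniq : ∀ i j : G.edgeSet, s(head i, tail i) = s(head j, tail j) → i = j := by
    intro i j h
    exact Subtype.ext (by rw [hor i, hor j, h])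
  have hnead : ∀ i : G.edgeSet, G.Adj (head i) (tail i) := by
    intro i
    rw [← SimpleGraph.mem_edgeSet, ← hor i]
    exact i.2
  have hne : ∀ i : G.edgeSet, head i ≠ tail i := fun i => (hnead i).ne
  have hHS : ∀ A : Finset G.edgeSet,
      HS head tail A = SimpleGraph.fromEdgeSet
        ((A.image (fun e : G.edgeSet => (e : Sym2 V)) : Finset (Sym2 V)) : Set (Sym2 V)) := by
    intro A
    unfold HS
    exact congrArg (fun X : Finset (Sym2 V) => SimpleGraph.fromEdgeSet (↑X : Set (Sym2 V)))
      (Finset.image_congr (fun a _ => (hor a).symm))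
  set N : Matrix {v : V // v ≠ x₀} G.edgeSet ℝ := Matrix.of fun x e => M (↑x : V) e with hN
  have hRHS : (Matrix.of fun x y : {v : V // v ≠ x₀} =>
      ∑ e : G.edgeSet, M (x : V) e * M (y : V) e) = N * Nᵀ := by
    ext x y
    simp [Matrix.mul_apply, hN]
  rw [hRHS, cauchy_binet_sq N]
  -- cast each summand to the tree indicator
  have hcast : ∀ (S : Finset G.edgeSet)
      (hS : S ∈ Finset.univ.powersetCard (Fintype.card {v : V // v ≠ x₀})),
      (N.submatrix id (pickFun S hS)).det ^ 2
        = if (SimpleGraph.fromEdgeSet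
            ((S.image (fun e : G.edgeSet => (e : Sym2 V)) : Finset (Sym2 V)) :
              Set (Sym2 V))).IsTree then (1 : ℝ) else 0 := by
    intro S hS
    have hmat : N.submatrix id (pickFun S hS)
        = (Int.castRingHom ℝ).mapMatrix
            (Matrix.of fun x j : {v : V // v ≠ x₀} => inc head tail ↑x (pickFun S hS j)) := by
      ext x j
      simp only [Matrix.submatrix_apply, id_eq, RingHom.mapMatrix_apply, Matrix.map_apply,
        Matrix.of_apply, hN]
      rw [hM (↑x : V) (pickFun S hS j), inc]
      simp only [Matrix.of_apply]
      split_ifs <;> simp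
    rw [hmat, ← RingHom.map_det]
    have hind := det_sq_eq_tree_indicator head tail x₀ huniq hne S (pickFun S hS)
      (pickFun_injective S hS) (pickFun_image S hS)
    rw [hHS S] at hind
    rw [show ((Int.castRingHom ℝ) ((Matrix.of fun x j : {v : V // v ≠ x₀} =>
        inc head tail ↑x (pickFun S hS j)).det)) ^ 2
      = (((Matrix.of fun x j : {v : V // v ≠ x₀} =>
        inc head tail ↑x (pickFun S hS j)).det ^ 2 : ℤ) : ℝ) by rw [← map_pow]; rfl]
    rw [hind]
    split_ifs <;> norm_num
  rw [Finset.sum_congr rfl (fun S _ => hcast S.1 S.2)]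
  rw [Finset.sum_attach (Finset.univ.powersetCard (Fintype.card {v : V // v ≠ x₀}))
    (fun S => if (SimpleGraph.fromEdgeSet
        ((S.image (fun e : G.edgeSet => (e : Sym2 V)) : Finset (Sym2 V)) :
          Set (Sym2 V))).IsTree then (1 : ℝ) else 0)]
  rw [Finset.sum_boole]
  -- now count
  have hcardn : Fintype.card {v : V // v ≠ x₀} = Fintype.card V - 1 := by
    simp [Fintype.card_subtype_compl, Fintype.card_subtype_eq]
  have htreecard : ∀ A : Finset G.edgeSet,
      (SimpleGraph.fromEdgeSet
        ((A.image (fun e : G.edgeSet => (e : Sym2 V)) : Finset (Sym2 V)) :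
          Set (Sym2 V))).IsTree → A.card = Fintype.card {v : V // v ≠ x₀} := by
    intro A htree
    haveI : Fintype ↥(SimpleGraph.fromEdgeSet
        ((A.image (fun e : G.edgeSet => (e : Sym2 V)) : Finset (Sym2 V)) :
          Set (Sym2 V))).edgeSet := Fintype.ofFinite _
    have hcardE := htree.card_edgeFinset
    have hEF : (SimpleGraph.fromEdgeSet
        ((A.image (fun e : G.edgeSet => (e : Sym2 V)) : Finset (Sym2 V)) :
          Set (Sym2 V))).edgeFinset = A.image (fun e : G.edgeSet => (e : Sym2 V)) := by
      ext e
      rw [SimpleGraph.mem_edgeFinset, SimpleGraph.edgeSet_fromEdgeSet]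
      simp only [Set.mem_diff, Finset.mem_coe, Set.mem_setOf_eq]
      constructor
      · exact fun h => h.1
      · intro h
        refine ⟨h, ?_⟩
        obtain ⟨a, _, rfl⟩ := Finset.mem_image.mp h
        exact G.not_isDiag_of_mem_edgeSet a.2
    rw [hEF] at hcardE
    rw [Finset.card_image_of_injective A Subtype.val_injective] at hcardE
    omega
  have hfiltereq : Finset.univ.filter (fun A : Finset G.edgeSet =>
      (SimpleGraph.fromEdgeSet
        ((A.image (fun e : G.edgeSet => (e : Sym2 V)) : Finset (Sym2 V)) :
          Set (Sym2 V))).IsTree)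
      = (Finset.univ.powersetCard (Fintype.card {v : V // v ≠ x₀})).filter
        (fun A : Finset G.edgeSet =>
      (SimpleGraph.fromEdgeSet
        ((A.image (fun e : G.edgeSet => (e : Sym2 V)) : Finset (Sym2 V)) :
          Set (Sym2 V))).IsTree) := by
    ext A
    simp only [Finset.mem_filter, Finset.mem_univ, true_and, Finset.mem_powersetCard,
      Finset.subset_univ]
    constructor
    · intro h
      exact ⟨htreecard A h, h⟩
    · exact fun h => h.2
  rw [← hfiltereq]
  rw [Nat.card_eq_fintype_card, Fintype.card_subtype]
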